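/- arXiv:0805.2599 — 2 statements merged into one kernel-verified Lean document; each statement's English description precedes it below -/
import Mathlib

section
/- Let V be a real inner product space, T a totally symmetric trilinear form on V, C(X) := Tr(Y ↦ T♯(X,Y)) its trace form where g(T♯(X,Y),Z) = T(X,Y,Z), and ζ ∈ V with T(ζ,·,·) = 0. If T has the quasi-C-reducible form T(X,Y,Z) = A(X,Y)C(Z) + A(Y,Z)C(X) + A(Z,X)C(Y) for a symmetric bilinear form A with A(ζ,ζ) ≠ 0, then C = 0 and hence T = 0. -/
open scoped RealInnerProductSpace

/-- if `T` is totally symmetric with trace form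
`C(X) = Tr(Y ↦ T♯(X,Y))`, `T(ζ,·,·) = 0`, and `T` is quasi-C-reducible:
`T(X,Y,Z) = A(X,Y)C(Z) + A(Y,Z)C(X) + A(Z,X)C(Y)` with `A` symmetric and
`A(ζ,ζ) ≠ 0`, then `C = 0` and hence `T = 0`. -/
theorem statement15 {V : Type*} [NormedAddCommGroup V] [InnerProductSpace ℝ V]
    [FiniteDimensional ℝ V]
    (T : V → V → V → ℝ)
    (hTs1 : ∀ X Y Z, T X Y Z = T Y X Z) (hTs2 : ∀ X Y Z, T X Y Z = T X Z Y)
    (Tsharp : V → V →ₗ[ℝ] V)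
    (hTsharp : ∀ X Y Z, ⟪Tsharp X Y, Z⟫ = T X Y Z)
    (C : V → ℝ) (hC : ∀ X, C X = LinearMap.trace ℝ V (Tsharp X))
    (A : V → V → ℝ) (hA : ∀ X Y, A X Y = A Y X)
    (ζ : V) (hTζ : ∀ Y Z, T ζ Y Z = 0)
    (hred : ∀ X Y Z, T X Y Z = A X Y * C Z + A Y Z * C X + A Z X * C Y)
    (hAζ : A ζ ζ ≠ 0) :
    (∀ X, C X = 0) ∧ ∀ X Y Z, T X Y Z = 0 := by
  have hTz : Tsharp ζ = 0 := by
    ext Y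
    have : ⟪Tsharp ζ Y, Tsharp ζ Y⟫ = 0 := by rw [hTsharp]; exact hTζ Y _
    simpa using inner_self_eq_zero.mp this
  have hCζ : C ζ = 0 := by rw [hC, hTz]; simp
  have hC0 : ∀ X, C X = 0 := by
    intro X
    have h := hred ζ X ζ
    rw [hTζ] at h
    rw [hCζ] at h
    have h' : A ζ X * 0 + A X ζ * 0 + A ζ ζ * C X = 0 := h.symm
    have : A ζ ζ * C X = 0 := by linarith
    exact (mul_eq_zero.mp this).resolve_left hAζ
  refine ⟨hC0, fun X Y Z => ?_⟩
  rw [hred, hC0, hC0, hC0]; ring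
end

section
/- Let V be an n-dimensional real inner product space (n ≥ 3), η ∈ V with g(η,η) = L² > 0, ℏ the angular metric of η, T a totally symmetric trilinear form with associated trace form C and C² := C(C♯) ≠ 0 where g(C♯,X) = C(X). Suppose T is semi-C-reducible: T(X,Y,Z) = (μ/(n+1))[ℏ(X,Y)C(Z) + ℏ(Y,Z)C(X) + ℏ(Z,X)C(Y)] + (τ/C²)C(X)C(Y)C(Z) with μ + τ = 1. If ζ ∈ V satisfies T(ζ,·,·) = 0, C(ζ) = 0, and ℏ(ζ,ζ) ≠ 0, then μ = 0, i.e., T(X,Y,Z) = C(X)C(Y)C(Z)/C² (T is C₂-like). -/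
open scoped RealInnerProductSpace

/-- if `T` is semi-C-reducible with `μ + τ = 1`, `C² = C(C♯) ≠ 0`,
and `ζ` satisfies `T(ζ,·,·) = 0`, `C(ζ) = 0`, `ℏ(ζ,ζ) ≠ 0`, then `μ = 0`,
i.e. `T(X,Y,Z) = C(X)C(Y)C(Z)/C²` (C₂-like). -/
theorem statement16 {V : Type*} [NormedAddCommGroup V] [InnerProductSpace ℝ V]
    [FiniteDimensional ℝ V]
    (n : ℕ) (hn : n = Module.finrank ℝ V) (hn3 : 3 ≤ n)
    (η : V) (L : ℝ) (hL : 0 < L ^ 2) (hη : ⟪η, η⟫ = L ^ 2)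
    (hbar : V → V → ℝ)
    (hhbar : ∀ X Y, hbar X Y = ⟪X, Y⟫ - ⟪X, η⟫ * ⟪Y, η⟫ / L ^ 2)
    (T : V → V → V → ℝ)
    (hTs1 : ∀ X Y Z, T X Y Z = T Y X Z) (hTs2 : ∀ X Y Z, T X Y Z = T X Z Y)
    (Tsharp : V → V →ₗ[ℝ] V)
    (hTsharp : ∀ X Y Z, ⟪Tsharp X Y, Z⟫ = T X Y Z)
    (C : V → ℝ) (hC : ∀ X, C X = LinearMap.trace ℝ V (Tsharp X))
    (Csharp : V) (hCsharp : ∀ X, ⟪Csharp, X⟫ = C X)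
    (C2 : ℝ) (hC2 : C2 = C Csharp) (hC2ne : C2 ≠ 0)
    (μ τ : ℝ) (hμτ : μ + τ = 1)
    (hred : ∀ X Y Z, T X Y Z = (μ / (n + 1 : ℝ)) *
        (hbar X Y * C Z + hbar Y Z * C X + hbar Z X * C Y)
      + (τ / C2) * (C X * C Y * C Z))
    (ζ : V) (hTζ : ∀ Y Z, T ζ Y Z = 0) (hCζ : C ζ = 0) (hhζ : hbar ζ ζ ≠ 0) :
    μ = 0 ∧ ∀ X Y Z, T X Y Z = C X * C Y * C Z / C2 := by
  have hn1 : (n : ℝ) + 1 ≠ 0 := by positivity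
  have h := hred ζ ζ Csharp
  rw [hTζ, hCζ, ← hC2] at h
  have hμ : μ = 0 := by
    have h' : μ / (n + 1 : ℝ) * (hbar ζ ζ * C2) = 0 := by linarith [h]
    rcases mul_eq_zero.mp h' with h1 | h2
    · exact (div_eq_zero_iff.mp h1).resolve_right hn1
    · exact absurd h2 (mul_ne_zero hhζ hC2ne)
  have hτ : τ = 1 := by linarith
  refine ⟨hμ, fun X Y Z => ?_⟩
  rw [hred X Y Z, hμ, hτ]
  ring
end
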